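/- Let (X, T, Y) satisfy Y = T·Y_1 + (1−T)·Y_0 with (Y_0, Y_1) ⊥ T | X. Then for any integrable potential outcomes, E[Y·T / e(X)] = E[Y_1] and E[Y·(1−T)/(1−e(X))] = E[Y_0], where e(X) = P(T=1|X), provided 0 < e(X) < 1 almost surely (inverse-propensity weighting identity). -/
import Mathlib

open MeasureTheory

lemma ipw_key {Ω : Type*} [MeasurableSpace Ω] (P : Measure Ω)
    (Y0 Y1 : Ω → ℝ) (hY0 : AEMeasurable Y0 P) (hY1 : AEMeasurable Y1 P)
    (A s : Set Ω) (hs : MeasurableSet s) (hAs : MeasurableSet (A ∩ s))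
    (hind : ∀ B : Set (ℝ × ℝ), MeasurableSet B →
      P (A ∩ {ω | (Y0 ω, Y1 ω) ∈ B} ∩ s) * P s = P (A ∩ s) * P ({ω | (Y0 ω, Y1 ω) ∈ B} ∩ s))
    (f : ℝ × ℝ → ℝ) (hf : Measurable f) :
    (P s).toReal * ∫ ω in A ∩ s, f (Y0 ω, Y1 ω) ∂P
      = (P (A ∩ s)).toReal * ∫ ω in s, f (Y0 ω, Y1 ω) ∂P := by
  set YY : Ω → ℝ × ℝ := fun ω => (Y0 ω, Y1 ω) with hYYdef
  have hYY : AEMeasurable YY P := hY0.prodMk hY1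
  have key : (P s) • Measure.map YY (P.restrict (A ∩ s))
      = (P (A ∩ s)) • Measure.map YY (P.restrict s) := by
    ext B hB
    rw [Measure.smul_apply, Measure.smul_apply, smul_eq_mul, smul_eq_mul,
      Measure.map_apply_of_aemeasurable (hYY.restrict) hB,
      Measure.map_apply_of_aemeasurable (hYY.restrict) hB,
      Measure.restrict_apply' hAs, Measure.restrict_apply' hs]
    have h1 : YY ⁻¹' B ∩ (A ∩ s) = A ∩ {ω | (Y0 ω, Y1 ω) ∈ B} ∩ s := by
      ext ω; simp only [Set.mem_inter_iff, Set.mem_preimage, Set.mem_setOf_eq]; tauto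
    have h2 : YY ⁻¹' B ∩ s = {ω | (Y0 ω, Y1 ω) ∈ B} ∩ s := rfl
    rw [h1, h2, mul_comm (P s), hind B hB]
  calc (P s).toReal * ∫ ω in A ∩ s, f (YY ω) ∂P
      = (P s).toReal * ∫ p, f p ∂(Measure.map YY (P.restrict (A ∩ s))) := by
        rw [integral_map (hYY.restrict) hf.aestronglyMeasurable]
    _ = ∫ p, f p ∂((P s) • Measure.map YY (P.restrict (A ∩ s))) := by
        rw [integral_smul_measure]; rfl
    _ = ∫ p, f p ∂((P (A ∩ s)) • Measure.map YY (P.restrict s)) := by rw [key]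
    _ = (P (A ∩ s)).toReal * ∫ p, f p ∂(Measure.map YY (P.restrict s)) := by
        rw [integral_smul_measure]; rfl
    _ = (P (A ∩ s)).toReal * ∫ ω in s, f (YY ω) ∂P := by
        rw [integral_map (hYY.restrict) hf.aestronglyMeasurable]

/-- Inverse-propensity weighting identity: under unconfoundedness given a
countable covariate and positivity `0 < e(x) < 1` wherever `P(X=x) > 0`,
`E[Y·T / e(X)] = E[Y₁]` and `E[Y·(1-T)/(1-e(X))] = E[Y₀]`. -/
theorem ipw_identity {Ω 𝒳 : Type*} [MeasurableSpace Ω]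
    [MeasurableSpace 𝒳] [Countable 𝒳] [MeasurableSingletonClass 𝒳]
    (P : Measure Ω) [IsProbabilityMeasure P]
    (X : Ω → 𝒳) (hX : Measurable X) (T : Ω → Bool) (hT : Measurable T)
    (Y0 Y1 Y : Ω → ℝ)
    (hY : ∀ ω, Y ω = if T ω then Y1 ω else Y0 ω)
    (hY0 : Integrable Y0 P) (hY1 : Integrable Y1 P)
    (hindep : ∀ (t : Bool) (B : Set (ℝ × ℝ)), MeasurableSet B → ∀ x : 𝒳,
      P ({ω | T ω = t} ∩ {ω | (Y0 ω, Y1 ω) ∈ B} ∩ {ω | X ω = x}) * P {ω | X ω = x}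
        = P ({ω | T ω = t} ∩ {ω | X ω = x}) * P ({ω | (Y0 ω, Y1 ω) ∈ B} ∩ {ω | X ω = x}))
    (e : 𝒳 → ℝ)
    (he : ∀ x, e x = (P ({ω | T ω = true} ∩ {ω | X ω = x})).toReal
        / (P {ω | X ω = x}).toReal)
    (hpos : ∀ x : 𝒳, 0 < P {ω | X ω = x} →
      0 < P ({ω | T ω = true} ∩ {ω | X ω = x}) ∧
      P ({ω | T ω = true} ∩ {ω | X ω = x}) < P {ω | X ω = x})
    (hw1 : Integrable (fun ω => Y ω * (if T ω then 1 else 0) / e (X ω)) P)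
    (hw0 : Integrable (fun ω => Y ω * (if T ω then 0 else 1) / (1 - e (X ω))) P) :
    (∫ ω, Y ω * (if T ω then 1 else 0) / e (X ω) ∂P) = ∫ ω, Y1 ω ∂P ∧
    (∫ ω, Y ω * (if T ω then 0 else 1) / (1 - e (X ω)) ∂P) = ∫ ω, Y0 ω ∂P := by
  classical
  -- notation
  set sx : 𝒳 → Set Ω := fun x => {ω | X ω = x} with hsxdef
  have hsx : ∀ x, MeasurableSet (sx x) := fun x => hX (measurableSet_singleton x)
  have hTt : ∀ t : Bool, MeasurableSet {ω | T ω = t} := fun t => hT (measurableSet_singleton t)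
  have hUnion : (⋃ x : 𝒳, sx x) = Set.univ := by
    ext ω; simp only [Set.mem_iUnion, Set.mem_univ, iff_true]
    exact ⟨X ω, rfl⟩
  have hdisj : Pairwise (Function.onFun Disjoint sx) := by
    intro a b hab
    simp only [Function.onFun, Set.disjoint_left]
    intro ω ha hb
    exact hab (ha.symm.trans hb)
  -- decomposition of integrals into sums over x
  have hsum : ∀ (g : Ω → ℝ), Integrable g P → ∫ ω, g ω ∂P = ∑' x : 𝒳, ∫ ω in sx x, g ω ∂P := by
    intro g hg
    have h := integral_iUnion (μ := P) (f := g) hsx hdisj (hUnion ▸ hg.integrableOn)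
    rw [hUnion, Measure.restrict_univ] at h
    exact h
  -- pointwise rewriting of the weighted integrands
  have hg1 : (fun ω => Y ω * (if T ω then 1 else 0) / e (X ω))
      = fun ω => (if T ω then Y1 ω else 0) * (e (X ω))⁻¹ := by
    funext ω
    cases hTω : T ω <;> simp [hY ω, hTω, div_eq_mul_inv]
  have hg0 : (fun ω => Y ω * (if T ω then 0 else 1) / (1 - e (X ω)))
      = fun ω => (if T ω then 0 else Y0 ω) * (1 - e (X ω))⁻¹ := by
    funext ω
    cases hTω : T ω <;> simp [hY ω, hTω, div_eq_mul_inv]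
  constructor
  · rw [hg1, hsum _ (hg1 ▸ hw1), hsum Y1 hY1]
    refine tsum_congr fun x => ?_
    by_cases hz : P (sx x) = 0
    · rw [Measure.restrict_eq_zero.mpr hz]; simp
    · obtain ⟨hapos, hab⟩ := hpos x (pos_iff_ne_zero.mpr hz)
      set a := P ({ω | T ω = true} ∩ sx x) with hadef
      set b := P (sx x) with hbdef
      have hbt : b ≠ ⊤ := measure_ne_top P _
      have hat : a ≠ ⊤ := measure_ne_top P _
      have hbpos : (0:ℝ) < b.toReal := ENNReal.toReal_pos hz hbt
      have hapos' : (0:ℝ) < a.toReal := ENNReal.toReal_pos hapos.ne' hat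
      -- constant e on sx x
      have step1 : ∫ ω in sx x, (if T ω then Y1 ω else 0) * (e (X ω))⁻¹ ∂P
          = (∫ ω in sx x, (if T ω then Y1 ω else 0) ∂P) * (e x)⁻¹ := by
        rw [← integral_mul_const]
        refine setIntegral_congr_fun (hsx x) fun ω hω => ?_
        have : X ω = x := hω
        rw [this]
      have step2 : ∫ ω in sx x, (if T ω then Y1 ω else 0) ∂P
          = ∫ ω in {ω | T ω = true} ∩ sx x, Y1 ω ∂P := by
        have : (fun ω => if T ω then Y1 ω else 0)
            = Set.indicator {ω | T ω = true} Y1 := by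
          funext ω; cases hTω : T ω <;> simp [Set.indicator_apply, hTω]
        rw [this, setIntegral_indicator (hTt true), Set.inter_comm]
      have key := ipw_key P Y0 Y1 hY0.1.aemeasurable hY1.1.aemeasurable
        {ω | T ω = true} (sx x) (hsx x) (((hTt true).inter (hsx x)))
        (fun B hB => hindep true B hB x) (fun p => p.2) measurable_snd
      simp only at key
      have step3 : ∫ ω in {ω | T ω = true} ∩ sx x, Y1 ω ∂P
          = (a.toReal / b.toReal) * ∫ ω in sx x, Y1 ω ∂P := by
        rw [div_mul_eq_mul_div, eq_div_iff hbpos.ne', mul_comm _ b.toReal]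
        exact key
      rw [step1, step2, step3, he x, ← hadef, ← hbdef]
      field_simp
  · rw [hg0, hsum _ (hg0 ▸ hw0), hsum Y0 hY0]
    refine tsum_congr fun x => ?_
    by_cases hz : P (sx x) = 0
    · rw [Measure.restrict_eq_zero.mpr hz]; simp
    · obtain ⟨hapos, hab⟩ := hpos x (pos_iff_ne_zero.mpr hz)
      set a := P ({ω | T ω = true} ∩ sx x) with hadef
      set b := P (sx x) with hbdef
      set c := P ({ω | T ω = false} ∩ sx x) with hcdef
      have hbt : b ≠ ⊤ := measure_ne_top P _
      have hat : a ≠ ⊤ := measure_ne_top P _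
      have hct : c ≠ ⊤ := measure_ne_top P _
      have hbpos : (0:ℝ) < b.toReal := ENNReal.toReal_pos hz hbt
      have habr : a.toReal < b.toReal := (ENNReal.toReal_lt_toReal hat hbt).mpr hab
      have hsplit : a + c = b := by
        rw [hadef, hcdef, hbdef]
        have h1 : {ω | T ω = true} ∩ sx x = sx x ∩ {ω | T ω = true} := Set.inter_comm _ _
        have h2 : {ω | T ω = false} ∩ sx x = sx x \ {ω | T ω = true} := by
          ext ω; cases hTω : T ω <;> simp [hTω, Set.mem_diff, Set.mem_inter_iff, And.comm]
        rw [h1, h2, measure_inter_add_diff _ (hTt true)]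
      have hcr : c.toReal = b.toReal - a.toReal := by
        have := congrArg ENNReal.toReal hsplit
        rw [ENNReal.toReal_add hat hct] at this
        linarith
      have hcpos : (0:ℝ) < c.toReal := by rw [hcr]; linarith
      have he' : 1 - e x = c.toReal / b.toReal := by
        rw [he x, ← hadef, ← hbdef, hcr]
        field_simp
      have step1 : ∫ ω in sx x, (if T ω then 0 else Y0 ω) * (1 - e (X ω))⁻¹ ∂P
          = (∫ ω in sx x, (if T ω then 0 else Y0 ω) ∂P) * (1 - e x)⁻¹ := by
        rw [← integral_mul_const]
        refine setIntegral_congr_fun (hsx x) fun ω hω => ?_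
        have : X ω = x := hω
        rw [this]
      have step2 : ∫ ω in sx x, (if T ω then 0 else Y0 ω) ∂P
          = ∫ ω in {ω | T ω = false} ∩ sx x, Y0 ω ∂P := by
        have : (fun ω => if T ω then 0 else Y0 ω)
            = Set.indicator {ω | T ω = false} Y0 := by
          funext ω; cases hTω : T ω <;> simp [Set.indicator_apply, hTω]
        rw [this, setIntegral_indicator (hTt false), Set.inter_comm]
      have key := ipw_key P Y0 Y1 hY0.1.aemeasurable hY1.1.aemeasurable
        {ω | T ω = false} (sx x) (hsx x) (((hTt false).inter (hsx x)))
        (fun B hB => hindep false B hB x) (fun p => p.1) measurable_fst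
      simp only at key
      have step3 : ∫ ω in {ω | T ω = false} ∩ sx x, Y0 ω ∂P
          = (c.toReal / b.toReal) * ∫ ω in sx x, Y0 ω ∂P := by
        rw [div_mul_eq_mul_div, eq_div_iff hbpos.ne', mul_comm _ b.toReal]
        exact key
      rw [step1, step2, step3, he']
      field_simp
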